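/- Fix λ > 0 and let ζ = ζ₃(λ) ∈ (0,1) be the unique solution of ζ/((ζ-1)ln(1-ζ)) = 1+λ. Then the function γ(x) = ((1-ζ)/ζ) · ln((1-ζ+xζ)/(1-ζ)) solves the ODE y'(x) = φ₃((x-y)/y) with γ(1) = 1/(1+λ), where φ₃(μ) = 1 - ζ₃(μ). -/

import Mathlib

open Real

private lemma expSlope_strictMono {s t : ℝ} (hs : 0 < s) (hst : s < t) :
    (exp s - 1) / s < (exp t - 1) / t := by
  have := strictConvexOn_exp.secant_strict_mono (a := 0) (x := s) (y := t)
    (Set.mem_univ _) (Set.mem_univ _) (Set.mem_univ _) hs.ne' (hs.trans hst).ne' hst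
  simpa [Real.exp_zero] using this

private lemma g_eq_expSlope {z : ℝ} (hz0 : 0 < z) (hz1 : z < 1) :
    z / ((z - 1) * log (1 - z)) = (exp (-log (1 - z)) - 1) / (-log (1 - z)) := by
  have h1 : (0:ℝ) < 1 - z := by linarith
  have hexp : exp (-log (1 - z)) = (1 - z)⁻¹ := by
    rw [Real.exp_neg, Real.exp_log h1]
  have hlogne : log (1 - z) ≠ 0 := by
    have : log (1 - z) < 0 := Real.log_neg (by linarith) (by linarith)
    linarith
  have hz1' : z - 1 ≠ 0 := by linarith
  rw [hexp, div_eq_div_iff (mul_ne_zero hz1' hlogne) (neg_ne_zero.2 hlogne)]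
  field_simp
  ring

private lemma g_injOn {z w : ℝ} (hz0 : 0 < z) (hz1 : z < 1) (hw0 : 0 < w) (hw1 : w < 1)
    (h : z / ((z - 1) * log (1 - z)) = w / ((w - 1) * log (1 - w))) : z = w := by
  by_contra hne
  have key : ∀ a b : ℝ, 0 < a → a < 1 → 0 < b → b < 1 → a < b →
      a / ((a - 1) * log (1 - a)) < b / ((b - 1) * log (1 - b)) := by
    intro a b ha0 ha1 hb0 hb1 hab
    rw [g_eq_expSlope ha0 ha1, g_eq_expSlope hb0 hb1]
    have hta : 0 < -log (1 - a) := by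
      have : log (1 - a) < 0 := Real.log_neg (by linarith) (by linarith)
      linarith
    have htab : -log (1 - a) < -log (1 - b) := by
      have : log (1 - b) < log (1 - a) := Real.log_lt_log (by linarith) (by linarith)
      linarith
    exact expSlope_strictMono hta htab
  rcases lt_or_gt_of_ne hne with hlt | hgt
  · exact absurd h (ne_of_lt (key _ _ hz0 hz1 hw0 hw1 hlt))
  · exact absurd h.symm (ne_of_lt (key _ _ hw0 hw1 hz0 hz1 hgt))

/-- The field line `γ` for the Stirling-first-kind vector field: with `ζ = ζ₃(λ) ∈ (0,1)`
the unique solution of `ζ/((ζ-1)ln(1-ζ)) = 1+λ`, the curve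
`γ(x) = ((1-ζ)/ζ) ln((1-ζ+xζ)/(1-ζ))` satisfies `γ(1) = 1/(1+λ)` and
`γ'(x) = φ₃((x-γ x)/γ x)` where `φ₃(μ) = 1 - ζ₃(μ)`. -/
theorem field_line_stirling1 (lam : ℝ) (hlam : 0 < lam)
    (zeta3 : ℝ → ℝ)
    (hz : ∀ mu : ℝ, 0 < mu →
      zeta3 mu ∈ Set.Ioo (0 : ℝ) 1 ∧
        zeta3 mu / ((zeta3 mu - 1) * log (1 - zeta3 mu)) = 1 + mu)
    (γ : ℝ → ℝ)
    (hγ : γ = fun x => ((1 - zeta3 lam) / zeta3 lam) *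
        log ((1 - zeta3 lam + x * zeta3 lam) / (1 - zeta3 lam))) :
    γ 1 = 1 / (1 + lam) ∧
    ∀ x : ℝ, 0 < x → HasDerivAt γ (1 - zeta3 ((x - γ x) / γ x)) x := by
  obtain ⟨⟨hζ0, hζ1⟩, hζeq⟩ := hz lam hlam
  set ζ := zeta3 lam with hζdef
  have ha : (0:ℝ) < 1 - ζ := by linarith
  have hlogζ : log (1 - ζ) < 0 := Real.log_neg ha (by linarith)
  -- γ 1 = 1/(1+λ)
  have h1 : γ 1 = 1 / (1 + lam) := by
    have : (1 - ζ + 1 * ζ) / (1 - ζ) = (1 - ζ)⁻¹ := by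
      field_simp
      ring
    rw [hγ]; simp only [this, Real.log_inv]
    rw [← hζeq]
    field_simp
    ring
  refine ⟨h1, fun x hx => ?_⟩
  set D := 1 - ζ + x * ζ with hD
  have hDpos : 0 < D := by have : 0 < x * ζ := mul_pos hx hζ0; simp [hD]; linarith
  -- γ x value and positivity
  have hγx : γ x = ((1 - ζ) / ζ) * (log D - log (1 - ζ)) := by
    rw [hγ]; simp only [← hD]; rw [Real.log_div (ne_of_gt hDpos) (ne_of_gt ha)]
  have hlogD : log (1 - ζ) < log D := by
    apply Real.log_lt_log ha; simp [hD]; positivity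
  have hγpos : 0 < γ x := by
    rw [hγx]; apply mul_pos (div_pos ha hζ0); linarith
  have hγlt : γ x < x := by
    rw [hγx]
    have hlt : log D - log (1 - ζ) < x * ζ / (1 - ζ) := by
      have hgt1 : 1 < D / (1 - ζ) := by
        rw [lt_div_iff₀ ha]; have : 0 < x * ζ := mul_pos hx hζ0; simp [hD]; linarith
      have := Real.log_lt_sub_one_of_pos (x := D / (1 - ζ)) (by positivity) hgt1.ne'
      rw [Real.log_div (ne_of_gt hDpos) (ne_of_gt ha)] at this
      have : log D - log (1 - ζ) < D / (1 - ζ) - 1 := this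
      have hDa : D / (1 - ζ) - 1 = x * ζ / (1 - ζ) := by field_simp; ring
      linarith [hDa ▸ this]
    calc ((1 - ζ) / ζ) * (log D - log (1 - ζ))
        < ((1 - ζ) / ζ) * (x * ζ / (1 - ζ)) := by
          apply mul_lt_mul_of_pos_left hlt (div_pos ha hζ0)
      _ = x := by field_simp
  -- μ > 0
  set μ := (x - γ x) / γ x with hμdef
  have hμpos : 0 < μ := div_pos (by linarith) hγpos
  obtain ⟨⟨hw0, hw1⟩, hweq⟩ := hz μ hμpos
  -- candidate w = xζ/D satisfies the same equation
  set w := x * ζ / D with hwdef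
  have hwc0 : 0 < w := by positivity
  have hwc1 : w < 1 := by
    rw [hwdef, div_lt_one hDpos]; simp [hD]; linarith
  have h1w : 1 - w = (1 - ζ) / D := by
    rw [hwdef]; field_simp; simp [hD]
  have hgw : w / ((w - 1) * log (1 - w)) = 1 + μ := by
    have hlog1w : log (1 - w) = -(log D - log (1 - ζ)) := by
      rw [h1w, Real.log_div (ne_of_gt ha) (ne_of_gt hDpos)]; ring
    have hμval : 1 + μ = x / γ x := by
      rw [hμdef]; field_simp; ring
    have hw1' : w - 1 = -((1 - ζ) / D) := by linarith [h1w]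
    rw [hμval, hlog1w, hγx, hw1', hwdef]
    have hζne : ζ ≠ 0 := ne_of_gt hζ0
    have hane : (1:ℝ) - ζ ≠ 0 := ne_of_gt ha
    have hDne : D ≠ 0 := ne_of_gt hDpos
    have hlne : log D - log (1 - ζ) ≠ 0 := by linarith
    generalize hLg : log D - log (1 - ζ) = L at hlne ⊢
    generalize hDg : D = Dv at hDne ⊢
    rw [show -((1 - ζ) / Dv) * -L = (1 - ζ) * L / Dv from by ring,
      div_eq_div_iff (div_ne_zero (mul_ne_zero hane hlne) hDne)
        (mul_ne_zero (div_ne_zero hane hζne) hlne)]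
    field_simp
  -- uniqueness gives zeta3 μ = w
  have hzw : zeta3 μ = w := g_injOn hw0 hw1 hwc0 hwc1 (by rw [hweq, hgw])
  -- derivative computation
  have hderiv : HasDerivAt γ ((1 - ζ) / D) x := by
    have hInner : HasDerivAt (fun y : ℝ => 1 - ζ + y * ζ) ζ x := by
      simpa using ((hasDerivAt_id x).mul_const ζ).const_add (1 - ζ)
    have hne : (1 - ζ + x * ζ) / (1 - ζ) ≠ 0 := by
      rw [← hD]; positivity
    have hlog := (Real.hasDerivAt_log hne).comp x (hInner.div_const (1 - ζ))
    have hmul := hlog.const_mul ((1 - ζ) / ζ)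
    rw [hγ]
    refine hmul.congr_deriv ?_
    have hζne : ζ ≠ 0 := ne_of_gt hζ0
    have hane : (1:ℝ) - ζ ≠ 0 := ne_of_gt ha
    have hDne : (1 - ζ + x * ζ) ≠ 0 := by rw [← hD]; exact ne_of_gt hDpos
    field_simp
    ring
  have : 1 - zeta3 μ = (1 - ζ) / D := by rw [hzw, h1w]
  rw [← hμdef] at *
  exact this ▸ hderiv
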